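/- Let Q ∈ ℝ^{n×n} be symmetric positive semidefinite, c ∈ ℝ^n, λ > 0, and define f(x) := (1/2)·xᵀQx + cᵀx + λ‖x‖₂. Suppose η > 0 is such that the matrix ηQ + (λ²/2)·I_n is invertible and the vector x* := −η·(ηQ + (λ²/2)·I_n)^{-1} c satisfies ‖x*‖₂ = 2η/λ. Then x* is a global minimizer of f over ℝ^n. -/

import Mathlib

open Matrix

/-- for `Q ⪰ 0` symmetric, `c ∈ ℝⁿ`, `λ > 0`, suppose `η > 0` is such that
`ηQ + (λ²/2)I` is invertible and `x* = −η (ηQ + (λ²/2)I)⁻¹ c` satisfies `‖x*‖₂ = 2η/λ`.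
Then `x*` globally minimizes `f(x) = (1/2) xᵀQx + cᵀx + λ‖x‖₂`. -/
theorem group_lasso_shrinkage_minimizer
    (n : ℕ) (Q : Matrix (Fin n) (Fin n) ℝ) (hQ : Q.PosSemidef)
    (c : Fin n → ℝ) (lam : ℝ) (hlam : 0 < lam)
    (f : (Fin n → ℝ) → ℝ)
    (hf : f = fun x => (1 / 2) * (x ⬝ᵥ Q.mulVec x) + c ⬝ᵥ x
        + lam * ‖(WithLp.equiv 2 (Fin n → ℝ)).symm x‖)
    (η : ℝ) (hη : 0 < η)
    (hinv : IsUnit (η • Q + (lam ^ 2 / 2) • (1 : Matrix (Fin n) (Fin n) ℝ)))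
    (xstar : Fin n → ℝ)
    (hxstar : xstar = -η • ((η • Q + (lam ^ 2 / 2) • (1 : Matrix (Fin n) (Fin n) ℝ))⁻¹.mulVec c))
    (hnorm : ‖(WithLp.equiv 2 (Fin n → ℝ)).symm xstar‖ = 2 * η / lam) :
    ∀ x : Fin n → ℝ, f xstar ≤ f x := by
  subst hf
  intro x
  simp only
  set A : Matrix (Fin n) (Fin n) ℝ :=
    η • Q + (lam ^ 2 / 2) • (1 : Matrix (Fin n) (Fin n) ℝ) with hA
  -- inner product vs dotProduct
  have hinner : ∀ a b : Fin n → ℝ, a ⬝ᵥ b =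
      (inner ℝ ((WithLp.equiv 2 (Fin n → ℝ)).symm a) ((WithLp.equiv 2 (Fin n → ℝ)).symm b) : ℝ) := by
    intro a b
    simp [PiLp.inner_apply, dotProduct, RCLike.inner_apply, mul_comm]
  -- symmetry of Q
  have hQT : Qᵀ = Q := by simpa [Matrix.IsSymm] using hQ.1
  have hsym : ∀ a b : Fin n → ℝ, a ⬝ᵥ Q.mulVec b = b ⬝ᵥ Q.mulVec a := by
    intro a b
    rw [Matrix.dotProduct_mulVec, ← Matrix.mulVec_transpose, hQT, dotProduct_comm]
  -- stationarity (vector form)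
  have hAinv : A * A⁻¹ = 1 := Matrix.mul_nonsing_inv _ ((Matrix.isUnit_iff_isUnit_det _).mp hinv)
  have hstat : η • Q.mulVec xstar + (lam ^ 2 / 2) • xstar = (-η) • c := by
    have h1 : A.mulVec xstar = (-η) • c := by
      rw [hxstar, Matrix.mulVec_smul, Matrix.mulVec_mulVec, hAinv, Matrix.one_mulVec]
    calc η • Q.mulVec xstar + (lam ^ 2 / 2) • xstar
        = A.mulVec xstar := by
          rw [hA, Matrix.add_mulVec, Matrix.smul_mulVec, Matrix.smul_mulVec,
            Matrix.one_mulVec]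
      _ = (-η) • c := h1
  -- abbreviations for norms (folds occurrences in the goal)
  set Nx := ‖(WithLp.equiv 2 (Fin n → ℝ)).symm x‖ with hNx
  set Ns := ‖(WithLp.equiv 2 (Fin n → ℝ)).symm xstar‖ with hNs
  -- scalar stationarity dotted with d := x - xstar
  have hB : η * ((x - xstar) ⬝ᵥ Q.mulVec xstar) + (lam ^ 2 / 2) * ((x - xstar) ⬝ᵥ xstar)
      = -η * ((x - xstar) ⬝ᵥ c) := by
    have := congrArg (fun v => (x - xstar) ⬝ᵥ v) hstat
    simpa [dotProduct_add, dotProduct_smul, smul_eq_mul] using this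
  have hB' : η * (x ⬝ᵥ Q.mulVec xstar - xstar ⬝ᵥ Q.mulVec xstar)
      + (lam ^ 2 / 2) * (x ⬝ᵥ xstar - xstar ⬝ᵥ xstar)
      = -η * (c ⬝ᵥ x - c ⬝ᵥ xstar) := by
    rw [sub_dotProduct, sub_dotProduct, sub_dotProduct,
      dotProduct_comm x c, dotProduct_comm xstar c] at hB
    exact hB
  -- quadratic nonneg & expansion
  have hquad : 0 ≤ (x - xstar) ⬝ᵥ Q.mulVec (x - xstar) := by simpa using hQ.dotProduct_mulVec_nonneg (x - xstar)
  have hexp : (x - xstar) ⬝ᵥ Q.mulVec (x - xstar)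
      = x ⬝ᵥ Q.mulVec x - 2 * (x ⬝ᵥ Q.mulVec xstar) + xstar ⬝ᵥ Q.mulVec xstar := by
    rw [Matrix.mulVec_sub, dotProduct_sub, sub_dotProduct, sub_dotProduct,
      hsym xstar x]
    ring
  have hq' : 0 ≤ η * (x ⬝ᵥ Q.mulVec x) - 2 * (η * (x ⬝ᵥ Q.mulVec xstar))
      + η * (xstar ⬝ᵥ Q.mulVec xstar) := by
    have := mul_nonneg hη.le hquad
    rw [hexp] at this
    nlinarith [this]
  -- norm facts
  have hSs : xstar ⬝ᵥ xstar = Ns * Ns := by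
    rw [hinner]; exact real_inner_self_eq_norm_mul_norm _
  have hCS : x ⬝ᵥ xstar ≤ Nx * Ns := by
    rw [hinner]; exact real_inner_le_norm _ _
  have hNx0 : 0 ≤ Nx := norm_nonneg _
  have hlNs : lam * Ns = 2 * η := by
    rw [hnorm]; field_simp
  -- derived scalar facts
  have hS2 : lam ^ 2 * (xstar ⬝ᵥ xstar) = 4 * η ^ 2 := by
    rw [hSs, show lam ^ 2 * (Ns * Ns) = (lam * Ns) * (lam * Ns) by ring, hlNs]; ring
  have hC2 : lam ^ 2 * (x ⬝ᵥ xstar) ≤ 2 * η * (lam * Nx) := by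
    calc lam ^ 2 * (x ⬝ᵥ xstar) ≤ lam ^ 2 * (Nx * Ns) := by
          exact mul_le_mul_of_nonneg_left hCS (by positivity)
      _ = (lam * Nx) * (lam * Ns) := by ring
      _ = (lam * Nx) * (2 * η) := by rw [hlNs]
      _ = 2 * η * (lam * Nx) := by ring
  have hN2 : 2 * η * (lam * Ns) = 4 * η ^ 2 := by rw [hlNs]; ring
  -- key inequality, scaled by 2η
  have h2η : (0 : ℝ) < 2 * η := by positivity
  have key : 2 * η * ((1 / 2) * (xstar ⬝ᵥ Q.mulVec xstar) + c ⬝ᵥ xstar + lam * Ns)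
      ≤ 2 * η * ((1 / 2) * (x ⬝ᵥ Q.mulVec x) + c ⬝ᵥ x + lam * Nx) := by
    nlinarith [hq', hB', hS2, hC2, hN2]
  exact le_of_mul_le_mul_left key h2η
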